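/- There exist a constant C > 0 and an integer N such that for all n ≥ N, | Σ_{ℓ ∈ ℤ, |ℓ| < n/2, ℓ ≡ n (mod 2)} p_2(ℓ / n^{3/4}) − (n^{3/4}/2) ∫_{−∞}^{∞} p_2(t) dt | ≤ C n^{1/12}. -/

import Mathlib

open MeasureTheory

noncomputable def p2 (t : ℝ) : ℝ := (t ^ 2 / 2 - t ^ 6 / 30) * Real.exp (-t ^ 4 / 12)

lemma p2_cont : Continuous p2 := by unfold p2; continuity

noncomputable def d2 (t : ℝ) : ℝ :=
  ((t - t ^ 5 / 5) + (t ^ 2 / 2 - t ^ 6 / 30) * (-(t ^ 3) / 3)) * Real.exp (-t ^ 4 / 12)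

lemma p2_hasDerivAt (t : ℝ) : HasDerivAt p2 (d2 t) t := by
  have h1 : HasDerivAt (fun t : ℝ => t ^ 2 / 2 - t ^ 6 / 30) (t - t ^ 5 / 5) t := by
    have := ((hasDerivAt_pow 2 t).div_const 2).sub ((hasDerivAt_pow 6 t).div_const 30)
    refine this.congr_deriv ?_; ring
  have h2 : HasDerivAt (fun t : ℝ => Real.exp (-t ^ 4 / 12))
      (Real.exp (-t ^ 4 / 12) * (-(t ^ 3) / 3)) t := by
    have hg : HasDerivAt (fun t : ℝ => -t ^ 4 / 12) (-(t ^ 3) / 3) t := by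
      have := ((hasDerivAt_pow 4 t).neg).div_const 12
      refine this.congr_deriv ?_; ring
    have := (Real.hasDerivAt_exp (-t ^ 4 / 12)).comp t hg
    exact this
  have := h1.mul h2
  refine this.congr_deriv ?_; unfold d2; ring

-- exp lower bound: (x/k)^k ≤ exp x for x ≥ 0
lemma exp_ge_pow (x : ℝ) (hx : 0 ≤ x) (k : ℕ) (hk : 0 < k) : (x / k) ^ k ≤ Real.exp x := by
  have hk' : (0:ℝ) < k := by exact_mod_cast hk
  have h1 : x / k + 1 ≤ Real.exp (x / k) := by
    have := Real.add_one_le_exp (x / k); linarith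
  calc (x / k) ^ k ≤ (x / k + 1) ^ k := by
        apply pow_le_pow_left₀ (by positivity); linarith
    _ ≤ (Real.exp (x / k)) ^ k := by
        apply pow_le_pow_left₀ (by positivity) h1
    _ = Real.exp x := by
        rw [← Real.exp_nat_mul]; congr 1; field_simp

lemma exp_quartic_le (t : ℝ) (ht : 1 ≤ |t|) : Real.exp (-t ^ 4 / 12) ≤ 46656 / |t| ^ 12 := by
  have hx : (0:ℝ) < |t| ^ 12 := by positivity
  have h4 : (0:ℝ) ≤ t ^ 4 / 12 := by positivity
  have h := exp_ge_pow (t ^ 4 / 12) h4 3 (by norm_num)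
  have he : (t ^ 4 / 12 / ((3:ℕ):ℝ)) ^ 3 = |t| ^ 12 / 46656 := by
    have h12 : |t| ^ 12 = t ^ 12 := by
      rw [← abs_pow]; exact abs_of_nonneg (by positivity)
    rw [h12]; push_cast; ring
  rw [he] at h
  have hexp : Real.exp (-t ^ 4 / 12) = (Real.exp (t ^ 4 / 12))⁻¹ := by
    rw [← Real.exp_neg]; ring_nf
  rw [hexp]
  have hh := inv_anti₀ (by positivity : (0:ℝ) < |t| ^ 12 / 46656) h
  calc (Real.exp (t ^ 4 / 12))⁻¹ ≤ (|t| ^ 12 / 46656)⁻¹ := hh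
    _ = 46656 / |t| ^ 12 := by field_simp

lemma d2_bound (t : ℝ) : |d2 t| ≤ 150000 := by
  set x := |t| with hxdef
  have hx0 : 0 ≤ x := abs_nonneg t
  have habs : |d2 t| ≤ (x + x ^ 5 + x ^ 9) * Real.exp (-t ^ 4 / 12) := by
    unfold d2
    rw [abs_mul, Real.abs_exp]
    apply mul_le_mul_of_nonneg_right _ (Real.exp_nonneg _)
    calc |(t - t ^ 5 / 5) + (t ^ 2 / 2 - t ^ 6 / 30) * (-(t ^ 3) / 3)|
        ≤ |t - t ^ 5 / 5| + |(t ^ 2 / 2 - t ^ 6 / 30) * (-(t ^ 3) / 3)| := abs_add_le _ _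
      _ ≤ (|t| + |t ^ 5 / 5|) + |t ^ 2 / 2 - t ^ 6 / 30| * |(-(t ^ 3) / 3)| := by
          rw [abs_mul]; exact add_le_add_left (abs_sub _ _) _
      _ ≤ (x + x ^ 5 / 5) + (x ^ 2 / 2 + x ^ 6 / 30) * (x ^ 3 / 3) := by
          apply add_le_add
          · apply add_le_add_right
            rw [abs_div, abs_pow]; norm_num; exact le_rfl
          · apply mul_le_mul _ _ (abs_nonneg _) (by positivity)
            · calc |t ^ 2 / 2 - t ^ 6 / 30| ≤ |t ^ 2 / 2| + |t ^ 6 / 30| := abs_sub _ _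
                _ = x ^ 2 / 2 + x ^ 6 / 30 := by
                    rw [hxdef]; rw [abs_div, abs_div, abs_pow, abs_pow]; norm_num
            · rw [abs_div, abs_neg, abs_pow]; norm_num; exact le_rfl
      _ ≤ x + x ^ 5 + x ^ 9 := by
          nlinarith [pow_nonneg hx0 5, pow_nonneg hx0 9, pow_nonneg hx0 3, pow_nonneg hx0 2]
  have ht4 : (0:ℝ) ≤ t ^ 4 := by positivity
  rcases le_total x 1 with hx1 | hx1
  · have he : Real.exp (-t ^ 4 / 12) ≤ 1 := Real.exp_le_one_iff.mpr (by linarith)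
    have h3 : x + x ^ 5 + x ^ 9 ≤ 3 := by
      nlinarith [pow_le_one₀ hx0 hx1 (n := 5), pow_le_one₀ hx0 hx1 (n := 9)]
    have : (x + x ^ 5 + x ^ 9) * Real.exp (-t ^ 4 / 12) ≤ 3 * 1 := by
      apply mul_le_mul h3 he (Real.exp_nonneg _) (by norm_num)
    linarith
  · have he := exp_quartic_le t hx1
    have hx1' : (1:ℝ) ≤ x := hx1
    have hp : x + x ^ 5 + x ^ 9 ≤ 3 * x ^ 9 := by
      nlinarith [pow_le_pow_right₀ hx1' (show 1 ≤ 9 by norm_num),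
        pow_le_pow_right₀ hx1' (show 5 ≤ 9 by norm_num)]
    have hx9 : (0:ℝ) < x ^ 12 := by positivity
    calc |d2 t| ≤ (x + x ^ 5 + x ^ 9) * Real.exp (-t ^ 4 / 12) := habs
      _ ≤ (3 * x ^ 9) * (46656 / x ^ 12) := by
          apply mul_le_mul hp he (Real.exp_nonneg _) (by positivity)
      _ ≤ 150000 := by
          have hx0' : (0:ℝ) < x := lt_of_lt_of_le one_pos hx1'
          have heq : 3 * x ^ 9 * (46656 / x ^ 12) = 139968 / x ^ 3 := by
            field_simp; ring
          rw [heq, div_le_iff₀ (by positivity)]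
          nlinarith [one_le_pow₀ hx1' (n := 3)]

lemma p2_bound (t : ℝ) : |p2 t| ≤ 5000 * Real.exp (-t ^ 2 / 24) := by
  set x := |t| with hxdef
  have hx0 : 0 ≤ x := abs_nonneg t
  have hx2 : x ^ 2 = t ^ 2 := sq_abs t
  have ht2 : (0:ℝ) ≤ t ^ 2 := by positivity
  have ht4 : (0:ℝ) ≤ t ^ 4 := by positivity
  have habs : |p2 t| ≤ (x ^ 2 / 2 + x ^ 6 / 30) * Real.exp (-t ^ 4 / 12) := by
    unfold p2
    rw [abs_mul, Real.abs_exp]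
    apply mul_le_mul_of_nonneg_right _ (Real.exp_nonneg _)
    calc |t ^ 2 / 2 - t ^ 6 / 30| ≤ |t ^ 2 / 2| + |t ^ 6 / 30| := abs_sub _ _
      _ = x ^ 2 / 2 + x ^ 6 / 30 := by rw [hxdef]; rw [abs_div, abs_div, abs_pow, abs_pow]; norm_num
  rcases le_total x 1 with hx1 | hx1
  · have h1 : x ^ 2 / 2 + x ^ 6 / 30 ≤ 1 := by
      nlinarith [pow_le_one₀ hx0 hx1 (n := 2), pow_le_one₀ hx0 hx1 (n := 6)]
    have h2 : Real.exp (-t ^ 4 / 12) ≤ 1 := Real.exp_le_one_iff.mpr (by linarith)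
    have h3 : (1:ℝ) - t ^ 2 / 24 ≤ Real.exp (-t ^ 2 / 24) := by
      have := Real.add_one_le_exp (-t ^ 2 / 24); linarith
    have h4 : t ^ 2 ≤ 1 := by rw [← hx2]; nlinarith
    have h5 : (23:ℝ) / 24 ≤ Real.exp (-t ^ 2 / 24) := by linarith
    calc |p2 t| ≤ (x ^ 2 / 2 + x ^ 6 / 30) * Real.exp (-t ^ 4 / 12) := habs
      _ ≤ 1 * 1 := mul_le_mul h1 h2 (Real.exp_nonneg _) (by norm_num)
      _ ≤ 5000 * Real.exp (-t ^ 2 / 24) := by nlinarith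
  · have hx1' : (1:ℝ) ≤ x := hx1
    have hq : t ^ 2 ≤ t ^ 4 := by
      rw [← hx2, show t ^ 4 = (t ^ 2) ^ 2 by ring, ← hx2]
      have h1 : (1:ℝ) ≤ x ^ 2 := one_le_pow₀ hx1'
      nlinarith
    have hsplit : Real.exp (-t ^ 4 / 12) ≤ Real.exp (-t ^ 4 / 24) * Real.exp (-t ^ 2 / 24) := by
      rw [← Real.exp_add]
      apply Real.exp_le_exp.mpr; linarith
    have hq8 : Real.exp (-t ^ 4 / 24) ≤ 2304 / x ^ 8 := by
      have h := exp_ge_pow (t ^ 4 / 24) (by positivity) 2 (by norm_num)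
      have he : (t ^ 4 / 24 / ((2:ℕ):ℝ)) ^ 2 = x ^ 8 / 2304 := by
        have h8 : x ^ 8 = t ^ 8 := by rw [hxdef, ← abs_pow]; exact abs_of_nonneg (by positivity)
        rw [h8]; push_cast; ring
      rw [he] at h
      have hexp : Real.exp (-t ^ 4 / 24) = (Real.exp (t ^ 4 / 24))⁻¹ := by
        rw [← Real.exp_neg]; ring_nf
      rw [hexp]
      have hh := inv_anti₀ (by positivity : (0:ℝ) < x ^ 8 / 2304) h
      calc (Real.exp (t ^ 4 / 24))⁻¹ ≤ (x ^ 8 / 2304)⁻¹ := hh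
        _ = 2304 / x ^ 8 := by field_simp
    have hpoly : x ^ 2 / 2 + x ^ 6 / 30 ≤ x ^ 6 := by
      nlinarith [pow_le_pow_right₀ hx1' (show 2 ≤ 6 by norm_num)]
    have hx8 : (0:ℝ) < x ^ 8 := by positivity
    calc |p2 t| ≤ (x ^ 2 / 2 + x ^ 6 / 30) * Real.exp (-t ^ 4 / 12) := habs
      _ ≤ (x ^ 2 / 2 + x ^ 6 / 30) * (Real.exp (-t ^ 4 / 24) * Real.exp (-t ^ 2 / 24)) := by
          apply mul_le_mul_of_nonneg_left hsplit (by positivity)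
      _ = ((x ^ 2 / 2 + x ^ 6 / 30) * Real.exp (-t ^ 4 / 24)) * Real.exp (-t ^ 2 / 24) := by ring
      _ ≤ 5000 * Real.exp (-t ^ 2 / 24) := by
          apply mul_le_mul_of_nonneg_right _ (Real.exp_nonneg _)
          calc (x ^ 2 / 2 + x ^ 6 / 30) * Real.exp (-t ^ 4 / 24) ≤ x ^ 6 * (2304 / x ^ 8) := by
                apply mul_le_mul hpoly hq8 (Real.exp_nonneg _) (by positivity)
            _ ≤ 5000 := by
                have hx0' : (0:ℝ) < x := lt_of_lt_of_le one_pos hx1'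
                have heq : x ^ 6 * (2304 / x ^ 8) = 2304 / x ^ 2 := by
                  field_simp
                rw [heq, div_le_iff₀ (by positivity)]
                nlinarith [one_le_pow₀ hx1' (n := 2)]

lemma p2_lip (x y : ℝ) : |p2 x - p2 y| ≤ 150000 * |x - y| := by
  have hdiff : Differentiable ℝ p2 := fun t => (p2_hasDerivAt t).differentiableAt
  have hlip : LipschitzWith 150000 p2 := by
    apply lipschitzWith_of_nnnorm_deriv_le (C := 150000) hdiff
    intro t
    rw [(p2_hasDerivAt t).deriv]
    have h := d2_bound t
    rw [← NNReal.coe_le_coe]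
    push_cast
    simpa [Real.norm_eq_abs] using h
  have h := hlip.dist_le_mul x y
  rw [Real.dist_eq, Real.dist_eq] at h
  calc |p2 x - p2 y| ≤ ((150000 : NNReal) : ℝ) * |x - y| := h
    _ = 150000 * |x - y| := by norm_num

lemma gauss48_integrable : Integrable (fun t : ℝ => Real.exp (-t ^ 2 / 48)) := by
  have := integrable_exp_neg_mul_sq (show (0:ℝ) < 1/48 by norm_num)
  apply this.congr
  filter_upwards with t
  congr 1; ring

lemma p2_integrable : Integrable p2 := by
  have hg : Integrable (fun t : ℝ => 5000 * Real.exp (-t ^ 2 / 24)) := by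
    have := integrable_exp_neg_mul_sq (show (0:ℝ) < 1/24 by norm_num)
    apply Integrable.const_mul
    apply this.congr
    filter_upwards with t
    congr 1; ring
  exact hg.mono' p2_cont.aestronglyMeasurable
    (Filter.Eventually.of_forall fun t => by simpa [Real.norm_eq_abs] using p2_bound t)

noncomputable def Kc : ℝ := 5000 * ∫ t : ℝ, Real.exp (-t ^ 2 / 48)

lemma Kc_nonneg : 0 ≤ Kc := by
  unfold Kc
  have : 0 ≤ ∫ t : ℝ, Real.exp (-t ^ 2 / 48) :=
    integral_nonneg fun t => (Real.exp_nonneg _)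
  positivity

lemma p2_abs_integrable : Integrable (fun t => |p2 t|) := p2_integrable.abs

lemma tail_bound (s : Set ℝ) (hs : MeasurableSet s) (R : ℝ) (hR : 0 ≤ R)
    (hsub : ∀ t ∈ s, R ≤ |t|) : ∫ t in s, |p2 t| ≤ Kc * Real.exp (-R ^ 2 / 48) := by
  have hpt : ∀ t ∈ s, |p2 t| ≤ Real.exp (-R ^ 2 / 48) * (5000 * Real.exp (-t ^ 2 / 48)) := by
    intro t ht
    have h1 := p2_bound t
    have h2 : R ^ 2 ≤ t ^ 2 := by
      have := hsub t ht
      calc R ^ 2 ≤ |t| ^ 2 := by nlinarith [abs_nonneg t]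
        _ = t ^ 2 := sq_abs t
    have h3 : Real.exp (-t ^ 2 / 24) ≤ Real.exp (-R ^ 2 / 48) * Real.exp (-t ^ 2 / 48) := by
      rw [← Real.exp_add]
      apply Real.exp_le_exp.mpr
      linarith
    calc |p2 t| ≤ 5000 * Real.exp (-t ^ 2 / 24) := h1
      _ ≤ 5000 * (Real.exp (-R ^ 2 / 48) * Real.exp (-t ^ 2 / 48)) := by
          apply mul_le_mul_of_nonneg_left h3 (by norm_num)
      _ = Real.exp (-R ^ 2 / 48) * (5000 * Real.exp (-t ^ 2 / 48)) := by ring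
  have hgi : Integrable (fun t : ℝ => Real.exp (-R ^ 2 / 48) * (5000 * Real.exp (-t ^ 2 / 48))) :=
    (gauss48_integrable.const_mul 5000).const_mul _
  calc ∫ t in s, |p2 t| ≤ ∫ t in s, Real.exp (-R ^ 2 / 48) * (5000 * Real.exp (-t ^ 2 / 48)) := by
        apply setIntegral_mono_on p2_abs_integrable.integrableOn hgi.integrableOn hs hpt
    _ ≤ ∫ t : ℝ, Real.exp (-R ^ 2 / 48) * (5000 * Real.exp (-t ^ 2 / 48)) := by
        apply setIntegral_le_integral hgi
        filter_upwards with t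
        positivity
    _ = Kc * Real.exp (-R ^ 2 / 48) := by
        rw [integral_const_mul, integral_const_mul]
        unfold Kc; ring

lemma cell_est {c d w B : ℝ} (hcd : c ≤ d) (hB : ∀ t ∈ Set.Icc c d, |p2 w - p2 t| ≤ B) :
    |(d - c) * p2 w - ∫ t in c..d, p2 t| ≤ B * (d - c) := by
  have h1 : (∫ t in c..d, (p2 w - p2 t)) = (d - c) * p2 w - ∫ t in c..d, p2 t := by
    rw [intervalIntegral.integral_sub intervalIntegrable_const (p2_cont.intervalIntegrable c d)]
    rw [intervalIntegral.integral_const]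
    simp [smul_eq_mul]
  rw [← h1]
  have h2 : ∀ t ∈ Set.uIoc c d, ‖p2 w - p2 t‖ ≤ B := by
    intro t ht
    rw [Set.uIoc_of_le hcd] at ht
    exact hB t ⟨le_of_lt ht.1, ht.2⟩
  have := intervalIntegral.norm_integral_le_of_norm_le_const h2
  rw [Real.norm_eq_abs] at this
  calc |∫ t in c..d, (p2 w - p2 t)| ≤ B * |d - c| := this
    _ = B * (d - c) := by rw [abs_of_nonneg (by linarith)]

lemma sum_reindex (n : ℕ) (hn : 1 ≤ n) (α : ℝ) :
    (∑ ℓ ∈ (Finset.Ioo (-(n : ℤ)) (n : ℤ)).filter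
        (fun ℓ : ℤ => 2 * |ℓ| < (n : ℤ) ∧ ℓ % 2 = (n : ℤ) % 2),
      p2 ((ℓ : ℝ) / α)) =
    ∑ j ∈ Finset.Icc ((n : ℤ) / 4 + 1) ((3 * (n : ℤ) - 1) / 4),
      p2 (((n : ℝ) - 2 * (j : ℝ)) / α) := by
  apply Finset.sum_nbij' (i := fun ℓ => ((n : ℤ) - ℓ) / 2) (j := fun j => (n : ℤ) - 2 * j)
  · intro ℓ hℓ
    simp only [Finset.mem_filter, Finset.mem_Ioo, Finset.mem_Icc] at *
    obtain ⟨⟨h1, h2⟩, h3, h4⟩ := hℓ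
    have ha1 : ℓ ≤ |ℓ| := le_abs_self ℓ
    have ha2 : -|ℓ| ≤ ℓ := neg_abs_le ℓ
    omega
  · intro j hj
    simp only [Finset.mem_filter, Finset.mem_Ioo, Finset.mem_Icc] at *
    have habs : 2 * |(n : ℤ) - 2 * j| = |2 * ((n:ℤ) - 2 * j)| := by
      rw [abs_mul]; norm_num
    rw [habs, abs_lt]
    omega
  · intro ℓ hℓ
    simp only [Finset.mem_filter, Finset.mem_Ioo] at hℓ
    omega
  · intro j hj
    simp only [Finset.mem_Icc] at hj
    omega
  · intro ℓ hℓ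
    simp only [Finset.mem_filter, Finset.mem_Ioo] at hℓ
    have : ((n : ℤ) - 2 * (((n : ℤ) - ℓ) / 2) : ℤ) = ℓ := by omega
    congr 1
    have := congrArg (fun z : ℤ => (z : ℝ)) this
    push_cast at this ⊢
    rw [this]


lemma telescope (n : ℕ) (a b : ℤ) (hab : a ≤ b) (α : ℝ) (hα : 0 < α) :
    (∑ j ∈ Finset.Icc a b,
        ∫ t in (((n : ℝ) - 2 * (j : ℝ)) / α - 1 / α)..(((n : ℝ) - 2 * (j : ℝ)) / α + 1 / α), p2 t) =
    ∫ t in (((n : ℝ) - 2 * (b : ℝ) - 1) / α)..(((n : ℝ) - 2 * (a : ℝ) + 1) / α), p2 t := by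
  set u : ℕ → ℝ := fun k => ((n : ℝ) - 2 * (b : ℝ) - 1 + 2 * k) / α with hu
  set M : ℕ := (b - a + 1).toNat with hM
  have step1 : (∑ j ∈ Finset.Icc a b,
      ∫ t in (((n : ℝ) - 2 * (j : ℝ)) / α - 1 / α)..(((n : ℝ) - 2 * (j : ℝ)) / α + 1 / α), p2 t)
      = ∑ k ∈ Finset.range M, ∫ t in u k..u (k + 1), p2 t := by
    apply Finset.sum_nbij' (i := fun j => (b - j).toNat) (j := fun k => b - (k : ℤ))
    · intro j hj
      simp only [Finset.mem_Icc, Finset.mem_range] at *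
      omega
    · intro k hk
      simp only [Finset.mem_Icc, Finset.mem_range] at *
      omega
    · intro j hj
      simp only [Finset.mem_Icc] at hj
      omega
    · intro k hk
      simp only [Finset.mem_range] at hk
      omega
    · intro j hj
      simp only [Finset.mem_Icc] at hj
      have h1 : u ((b - j).toNat) = ((n : ℝ) - 2 * (j : ℝ)) / α - 1 / α := by
        rw [hu]
        have : (((b - j).toNat : ℤ) : ℝ) = (b : ℝ) - (j : ℝ) := by
          rw [Int.toNat_of_nonneg (by omega)]; push_cast; ring
        push_cast at this ⊢
        rw [this]; ring
      have h2 : u ((b - j).toNat + 1) = ((n : ℝ) - 2 * (j : ℝ)) / α + 1 / α := by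
        rw [hu]
        have : (((b - j).toNat : ℤ) : ℝ) = (b : ℝ) - (j : ℝ) := by
          rw [Int.toNat_of_nonneg (by omega)]; push_cast; ring
        push_cast at this ⊢
        rw [this]; ring
      rw [h1, h2]
  rw [step1]
  have step2 := intervalIntegral.sum_integral_adjacent_intervals
    (a := u) (n := M) (μ := volume) (f := p2) (fun k _ => (p2_cont.intervalIntegrable _ _))
  rw [step2]
  have hu0 : u 0 = ((n : ℝ) - 2 * (b : ℝ) - 1) / α := by rw [hu]; push_cast; ring_nf
  have huM : u M = ((n : ℝ) - 2 * (a : ℝ) + 1) / α := by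
    rw [hu, hM]
    have : ((((b - a + 1).toNat : ℕ) : ℝ)) = (b : ℝ) - (a : ℝ) + 1 := by
      rw [show (((b - a + 1).toNat : ℕ) : ℝ) = (((b - a + 1).toNat : ℤ) : ℝ) by push_cast; ring,
        Int.toNat_of_nonneg (by omega)]
      push_cast; ring
    simp only []
    rw [this]; ring
  rw [hu0, huM]


lemma Kc_le : Kc ≤ 65000 := by
  unfold Kc
  have h1 : (∫ t : ℝ, Real.exp (-t ^ 2 / 48)) = ∫ t : ℝ, Real.exp (-(1/48) * t ^ 2) := by
    congr 1; funext t; congr 1; ring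
  rw [h1, integral_gaussian]
  have h2 : Real.pi / (1/48) = 48 * Real.pi := by ring
  rw [h2]
  have h3 : Real.sqrt (48 * Real.pi) ≤ 13 := by
    have hpi : Real.pi < 3.15 := Real.pi_lt_d2
    calc Real.sqrt (48 * Real.pi) ≤ Real.sqrt 169 := by
          apply Real.sqrt_le_sqrt; nlinarith
      _ = 13 := by
          rw [show (169:ℝ) = 13 ^ 2 by norm_num, Real.sqrt_sq (by norm_num)]
  linarith

set_option maxHeartbeats 2000000 in
theorem riemann_sum_p2 :
    ∃ C : ℝ, 0 < C ∧ ∃ N : ℕ, ∀ n : ℕ, N ≤ n →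
      |(∑ ℓ ∈ (Finset.Ioo (-(n : ℤ)) (n : ℤ)).filter
            (fun ℓ : ℤ => 2 * |ℓ| < (n : ℤ) ∧ ℓ % 2 = (n : ℤ) % 2),
          p2 ((ℓ : ℝ) / (n : ℝ) ^ ((3 : ℝ) / 4))) -
        ((n : ℝ) ^ ((3 : ℝ) / 4) / 2) * ∫ t : ℝ, p2 t| ≤ C * (n : ℝ) ^ ((1 : ℝ) / 12) := by
  refine ⟨600002, by norm_num, 10 ^ 60, ?_⟩
  intro n hn
  have hn1 : 1 ≤ n := le_trans (by norm_num) hn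
  have hnR1 : (1:ℝ) ≤ (n:ℝ) := by exact_mod_cast hn1
  have hn0 : (0:ℝ) < (n:ℝ) := by linarith
  have hnN : (10:ℝ) ^ 60 ≤ (n:ℝ) := by
    have : ((10 ^ 60 : ℕ) : ℝ) ≤ (n:ℝ) := by exact_mod_cast hn
    push_cast at this; linarith
  have hn4 : (4:ℤ) ≤ (n:ℤ) := by
    have h4 : (4:ℕ) ≤ n := le_trans (by norm_num) hn
    exact_mod_cast h4
  rw [sum_reindex n hn1 ((n : ℝ) ^ ((3 : ℝ) / 4))]
  set α := (n:ℝ) ^ ((3:ℝ)/4) with hαdef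
  have hα0 : 0 < α := Real.rpow_pos_of_pos hn0 _
  have hα1 : 1 ≤ α := Real.one_le_rpow hnR1 (by norm_num)
  set R := (n:ℝ) ^ ((1:ℝ)/12) with hRdef
  have hR1 : 1 ≤ R := Real.one_le_rpow hnR1 (by norm_num)
  have hR2 : 2 ≤ R := by
    have h1 : (((2:ℝ) ^ (12:ℕ)) : ℝ) ^ (((12:ℕ):ℝ))⁻¹ = 2 :=
      Real.pow_rpow_inv_natCast (by norm_num) (by norm_num)
    have h2 : ((2:ℝ) ^ (12:ℕ)) ≤ (n:ℝ) := by norm_num; nlinarith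
    calc (2:ℝ) = (((2:ℝ) ^ (12:ℕ)) : ℝ) ^ (((12:ℕ):ℝ))⁻¹ := h1.symm
      _ ≤ (n:ℝ) ^ (((12:ℕ):ℝ))⁻¹ := Real.rpow_le_rpow (by positivity) h2 (by norm_num)
      _ = R := by rw [hRdef]; norm_num
  set q := (n:ℝ) ^ ((1:ℝ)/4) / 4 with hqdef
  have hq4 : (0:ℝ) < (n:ℝ) ^ ((1:ℝ)/4) := Real.rpow_pos_of_pos hn0 _
  have hq0 : 0 ≤ q := by positivity
  have hq15 : (10:ℝ) ^ 15 ≤ (n:ℝ) ^ ((1:ℝ)/4) := by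
    have h1 : ((((10:ℝ) ^ 15) ^ (4:ℕ)) : ℝ) ^ (((4:ℕ):ℝ))⁻¹ = (10:ℝ) ^ 15 :=
      Real.pow_rpow_inv_natCast (by positivity) (by norm_num)
    have h2 : (((10:ℝ) ^ 15) ^ (4:ℕ)) ≤ (n:ℝ) := by norm_num; nlinarith
    calc (10:ℝ) ^ 15 = ((((10:ℝ) ^ 15) ^ (4:ℕ)) : ℝ) ^ (((4:ℕ):ℝ))⁻¹ := h1.symm
      _ ≤ (n:ℝ) ^ (((4:ℕ):ℝ))⁻¹ := Real.rpow_le_rpow (by positivity) h2 (by norm_num)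
      _ = (n:ℝ) ^ ((1:ℝ)/4) := by norm_num
  have hn56α : (n:ℝ) ^ ((5:ℝ)/6) / α = R := by
    rw [hαdef, hRdef, ← Real.rpow_sub hn0]; norm_num
  have hn1α : (n:ℝ) / α = (n:ℝ) ^ ((1:ℝ)/4) := by
    conv_lhs => rw [← Real.rpow_one (n:ℝ)]
    rw [hαdef, ← Real.rpow_sub hn0]; norm_num
  have hR26 : R ^ (26:ℕ) = (n:ℝ) ^ ((13:ℝ)/6) := by
    rw [hRdef, ← Real.rpow_natCast ((n:ℝ) ^ ((1:ℝ)/12)) 26, ← Real.rpow_mul hn0.le]; norm_num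
  have hn2_13 : (n:ℝ) ^ (2:ℕ) ≤ (n:ℝ) ^ ((13:ℝ)/6) := by
    rw [← Real.rpow_natCast (n:ℝ) 2]
    exact Real.rpow_le_rpow_of_exponent_le hnR1 (by norm_num)
  have hq2 : q ^ 2 = (n:ℝ) ^ ((1:ℝ)/2) / 16 := by
    rw [hqdef, div_pow]
    congr 1
    rw [← Real.rpow_natCast ((n:ℝ) ^ ((1:ℝ)/4)) 2, ← Real.rpow_mul hn0.le]; norm_num
    norm_num
  have hhalf2 : ((n:ℝ) ^ ((1:ℝ)/2)) ^ (2:ℕ) = (n:ℝ) := by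
    rw [← Real.rpow_natCast ((n:ℝ) ^ ((1:ℝ)/2)) 2, ← Real.rpow_mul hn0.le]
    norm_num
  have hαq : α * (n:ℝ) ^ ((1:ℝ)/4) = (n:ℝ) := by
    rw [hαdef, ← Real.rpow_add hn0]; norm_num
  set mZ := ⌈(n:ℝ) ^ ((5:ℝ)/6)⌉ with hmZdef
  have hmZ0 : 0 ≤ mZ := Int.ceil_nonneg (by positivity)
  have hmZlo : (n:ℝ) ^ ((5:ℝ)/6) ≤ (mZ:ℝ) := Int.le_ceil _
  have hmZhi : (mZ:ℝ) ≤ (n:ℝ) ^ ((5:ℝ)/6) + 1 := (Int.ceil_lt_add_one _).le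
  set a := (n:ℤ)/4 + 1 with hadef
  set b := (3*(n:ℤ) - 1)/4 with hbdef
  have hab : a ≤ b := by omega
  set I := ∫ t : ℝ, p2 t with hIdef
  set Jf : ℤ → ℝ := fun j =>
    ∫ t in (((n:ℝ) - 2*(j:ℝ))/α - 1/α)..(((n:ℝ) - 2*(j:ℝ))/α + 1/α), p2 t with hJdef
  set Eout := (10000:ℝ) * Real.exp (-(R-1)^2/24) with hEoutdef
  have hEout0 : 0 ≤ Eout := by rw [hEoutdef]; positivity
  -- per-cell estimate
  have hcell : ∀ j ∈ Finset.Icc a b,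
      |p2 (((n:ℝ) - 2*(j:ℝ))/α) - α/2 * Jf j| ≤
        if ((n:ℤ) - mZ ≤ 2*j ∧ 2*j ≤ (n:ℤ) + mZ) then 150000 * (1/α) else Eout := by
    intro j _
    set w := ((n:ℝ) - 2*(j:ℝ))/α with hwdef
    have hδ0 : 0 < 1/α := by positivity
    have hδ1 : 1/α ≤ 1 := by rw [div_le_one hα0]; linarith
    have hcd : w - 1/α ≤ w + 1/α := by linarith
    have key : ∀ B : ℝ, (∀ t ∈ Set.Icc (w - 1/α) (w + 1/α), |p2 w - p2 t| ≤ B) →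
        |p2 w - α/2 * Jf j| ≤ B := by
      intro B hB
      have h := cell_est hcd hB
      have hlen : (w + 1/α) - (w - 1/α) = 2/α := by ring
      rw [hlen] at h
      have hne : α ≠ 0 := ne_of_gt hα0
      have heq : p2 w - α/2 * Jf j = (α/2) * ((2/α) * p2 w - Jf j) := by
        field_simp
      rw [heq, abs_mul, abs_of_nonneg (by positivity : (0:ℝ) ≤ α/2)]
      calc α/2 * |(2/α) * p2 w - Jf j| ≤ α/2 * (B * (2/α)) := by
            apply mul_le_mul_of_nonneg_left h (by positivity)
        _ = B := by field_simp
    by_cases hP : ((n:ℤ) - mZ ≤ 2*j ∧ 2*j ≤ (n:ℤ) + mZ)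
    · rw [if_pos hP]
      apply key
      intro t ht
      have h2 : |w - t| ≤ 1/α := by
        rw [abs_le]; constructor
        · linarith [ht.2]
        · linarith [ht.1]
      calc |p2 w - p2 t| ≤ 150000 * |w - t| := p2_lip w t
        _ ≤ 150000 * (1/α) := by apply mul_le_mul_of_nonneg_left h2 (by norm_num)
    · rw [if_neg hP]
      apply key
      intro t ht
      have hwge : R ≤ |w| := by
        have hint : mZ + 1 ≤ |(n:ℤ) - 2*j| := by
          rcases le_or_gt ((n:ℤ) - 2*j) 0 with hc | hc
          · rw [abs_of_nonpos hc]; omega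
          · rw [abs_of_pos hc]; omega
        have hcast : (mZ:ℝ) + 1 ≤ |(n:ℝ) - 2*(j:ℝ)| := by
          exact_mod_cast hint
        have habsw : |w| = |(n:ℝ) - 2*(j:ℝ)| / α := by
          rw [hwdef, abs_div, abs_of_pos hα0]
        rw [habsw, ← hn56α]
        exact (div_le_div_iff_of_pos_right hα0).mpr (by linarith)
      have hw1 : 1 ≤ |w| := le_trans hR1 hwge
      have htge : R - 1 ≤ |t| := by
        have h1 : |t - w| ≤ 1 := by
          rw [abs_le]; constructor
          · linarith [ht.1]
          · linarith [ht.2]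
        have h2 := abs_sub_abs_le_abs_sub w t
        rw [abs_sub_comm w t] at h2
        linarith
      have hb1 : |p2 w| ≤ 5000 * Real.exp (-(R-1)^2/24) := by
        refine (p2_bound w).trans ?_
        apply mul_le_mul_of_nonneg_left _ (by norm_num)
        apply Real.exp_le_exp.mpr
        have h3 : R - 1 ≤ |w| := by linarith
        have h4 : (0:ℝ) ≤ R - 1 := by linarith
        have h5 : (R-1)^2 ≤ |w|^2 := pow_le_pow_left₀ h4 h3 2
        have hw2 : |w|^2 = w^2 := sq_abs w
        linarith
      have hb2 : |p2 t| ≤ 5000 * Real.exp (-(R-1)^2/24) := by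
        refine (p2_bound t).trans ?_
        apply mul_le_mul_of_nonneg_left _ (by norm_num)
        apply Real.exp_le_exp.mpr
        have h3 : R - 1 ≤ |t| := htge
        have h4 : (0:ℝ) ≤ R - 1 := by linarith
        have h5 : (R-1)^2 ≤ |t|^2 := pow_le_pow_left₀ h4 h3 2
        have ht2 : |t|^2 = t^2 := sq_abs t
        linarith
      calc |p2 w - p2 t| ≤ |p2 w| + |p2 t| := abs_sub _ _
        _ ≤ Eout := by rw [hEoutdef]; linarith
  -- counting
  have hcard1 : ((Finset.Icc a b).filter (fun j => (n:ℤ) - mZ ≤ 2*j ∧ 2*j ≤ (n:ℤ) + mZ)).card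
      ≤ mZ.toNat + 2 := by
    have hsub : (Finset.Icc a b).filter (fun j => (n:ℤ) - mZ ≤ 2*j ∧ 2*j ≤ (n:ℤ) + mZ)
        ⊆ Finset.Icc (((n:ℤ) - mZ)/2) (((n:ℤ) + mZ)/2) := by
      intro j hj
      simp only [Finset.mem_filter, Finset.mem_Icc] at *
      omega
    calc ((Finset.Icc a b).filter (fun j => (n:ℤ) - mZ ≤ 2*j ∧ 2*j ≤ (n:ℤ) + mZ)).card
        ≤ (Finset.Icc (((n:ℤ) - mZ)/2) (((n:ℤ) + mZ)/2)).card := Finset.card_le_card hsub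
      _ = ((((n:ℤ) + mZ)/2) + 1 - (((n:ℤ) - mZ)/2)).toNat := Int.card_Icc _ _
      _ ≤ mZ.toNat + 2 := by omega
  have hcard2 : ((Finset.Icc a b).filter
      (fun j => ¬((n:ℤ) - mZ ≤ 2*j ∧ 2*j ≤ (n:ℤ) + mZ))).card ≤ n := by
    calc ((Finset.Icc a b).filter (fun j => ¬((n:ℤ) - mZ ≤ 2*j ∧ 2*j ≤ (n:ℤ) + mZ))).card
        ≤ (Finset.Icc a b).card := Finset.card_le_card (Finset.filter_subset _ _)
      _ = (b + 1 - a).toNat := Int.card_Icc a b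
      _ ≤ n := by omega
  have hcentral : (((Finset.Icc a b).filter
        (fun j => (n:ℤ) - mZ ≤ 2*j ∧ 2*j ≤ (n:ℤ) + mZ)).card : ℝ) * (150000 * (1/α))
      ≤ 600000 * R := by
    have h3 : (((Finset.Icc a b).filter
        (fun j => (n:ℤ) - mZ ≤ 2*j ∧ 2*j ≤ (n:ℤ) + mZ)).card : ℤ) ≤ (mZ.toNat : ℤ) + 2 := by
      exact_mod_cast hcard1
    rw [Int.toNat_of_nonneg hmZ0] at h3
    have hc1R : (((Finset.Icc a b).filter
        (fun j => (n:ℤ) - mZ ≤ 2*j ∧ 2*j ≤ (n:ℤ) + mZ)).card : ℝ) ≤ (mZ:ℝ) + 2 := by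
      exact_mod_cast h3
    have hδ1 : 1/α ≤ 1 := by rw [div_le_one hα0]; linarith
    have hδ0 : (0:ℝ) ≤ 1/α := by positivity
    have e1 : 150000*((n:ℝ)^((5:ℝ)/6)/α) = 150000*R := by rw [hn56α]
    calc (((Finset.Icc a b).filter
          (fun j => (n:ℤ) - mZ ≤ 2*j ∧ 2*j ≤ (n:ℤ) + mZ)).card : ℝ) * (150000 * (1/α))
        ≤ ((n:ℝ)^((5:ℝ)/6) + 3) * (150000 * (1/α)) := by
          apply mul_le_mul_of_nonneg_right _ (by positivity)
          linarith
      _ = 150000*((n:ℝ)^((5:ℝ)/6)/α) + 450000*(1/α) := by ring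
      _ ≤ 150000*R + 450000*1 := by
          rw [e1]
          have : 450000*(1/α) ≤ 450000*1 := by
            apply mul_le_mul_of_nonneg_left hδ1 (by norm_num)
          linarith
      _ ≤ 600000 * R := by linarith
  have hkey : 10000 * (n:ℝ) ≤ Real.exp ((R-1)^2/24) := by
    have h1 : R^2/96 ≤ (R-1)^2/24 := by nlinarith [sq_nonneg (R-2), hR2]
    have h2 := exp_ge_pow (R^2/96) (by positivity) 13 (by norm_num)
    have h3 : (R^2/96/((13:ℕ):ℝ))^13 = R^(26:ℕ)/1248^13 := by push_cast; ring
    have h4 : (n:ℝ)^(2:ℕ) ≤ R^(26:ℕ) := by rw [hR26]; exact hn2_13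
    have h6 : (10000:ℝ)*1248^13 ≤ (n:ℝ) := le_trans (by norm_num) hnN
    have h7 : 10000*(n:ℝ) ≤ (n:ℝ)^(2:ℕ)/1248^13 := by
      rw [le_div_iff₀ (by positivity)]
      have h8 := mul_le_mul_of_nonneg_left h6 hn0.le
      calc 10000*(n:ℝ)*1248^13 = (n:ℝ)*((10000:ℝ)*1248^13) := by ring
        _ ≤ (n:ℝ)*(n:ℝ) := h8
        _ = (n:ℝ)^(2:ℕ) := by ring
    calc 10000*(n:ℝ) ≤ (n:ℝ)^(2:ℕ)/1248^13 := h7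
      _ ≤ R^(26:ℕ)/1248^13 := by
          apply (div_le_div_iff_of_pos_right (by positivity)).mpr h4
      _ = (R^2/96/((13:ℕ):ℝ))^13 := h3.symm
      _ ≤ Real.exp (R^2/96) := h2
      _ ≤ Real.exp ((R-1)^2/24) := Real.exp_le_exp.mpr h1
  have houter : (((Finset.Icc a b).filter
        (fun j => ¬((n:ℤ) - mZ ≤ 2*j ∧ 2*j ≤ (n:ℤ) + mZ))).card : ℝ) * Eout ≤ 1 := by
    have h5 : (((Finset.Icc a b).filter
        (fun j => ¬((n:ℤ) - mZ ≤ 2*j ∧ 2*j ≤ (n:ℤ) + mZ))).card : ℝ) ≤ (n:ℝ) := by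
      exact_mod_cast hcard2
    calc (((Finset.Icc a b).filter
          (fun j => ¬((n:ℤ) - mZ ≤ 2*j ∧ 2*j ≤ (n:ℤ) + mZ))).card : ℝ) * Eout
        ≤ (n:ℝ) * Eout := mul_le_mul_of_nonneg_right h5 hEout0
      _ = (10000*(n:ℝ)) * Real.exp (-(R-1)^2/24) := by rw [hEoutdef]; ring
      _ ≤ Real.exp ((R-1)^2/24) * Real.exp (-(R-1)^2/24) :=
          mul_le_mul_of_nonneg_right hkey (Real.exp_nonneg _)
      _ = 1 := by
          rw [← Real.exp_add, show (R-1)^2/24 + -(R-1)^2/24 = 0 by ring, Real.exp_zero]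
  have habs1 : |∑ j ∈ Finset.Icc a b, (p2 (((n:ℝ) - 2*(j:ℝ))/α) - α/2 * Jf j)|
      ≤ 600000 * R + 1 := by
    calc |∑ j ∈ Finset.Icc a b, (p2 (((n:ℝ) - 2*(j:ℝ))/α) - α/2 * Jf j)|
        ≤ ∑ j ∈ Finset.Icc a b, |p2 (((n:ℝ) - 2*(j:ℝ))/α) - α/2 * Jf j| :=
          Finset.abs_sum_le_sum_abs _ _
      _ ≤ ∑ j ∈ Finset.Icc a b,
            (if ((n:ℤ) - mZ ≤ 2*j ∧ 2*j ≤ (n:ℤ) + mZ) then 150000 * (1/α) else Eout) :=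
          Finset.sum_le_sum hcell
      _ = (((Finset.Icc a b).filter
            (fun j => (n:ℤ) - mZ ≤ 2*j ∧ 2*j ≤ (n:ℤ) + mZ)).card : ℝ) * (150000 * (1/α))
          + (((Finset.Icc a b).filter
            (fun j => ¬((n:ℤ) - mZ ≤ 2*j ∧ 2*j ≤ (n:ℤ) + mZ))).card : ℝ) * Eout := by
          rw [Finset.sum_ite, Finset.sum_const, Finset.sum_const, nsmul_eq_mul, nsmul_eq_mul]
      _ ≤ 600000 * R + 1 := add_le_add hcentral houter
  -- integral tails
  set u0 := ((n:ℝ) - 2*(b:ℝ) - 1)/α with hu0def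
  set uM := ((n:ℝ) - 2*(a:ℝ) + 1)/α with huMdef
  have htel : (∑ j ∈ Finset.Icc a b, Jf j) = ∫ t in u0..uM, p2 t :=
    telescope n a b hab α hα0
  have hu0q : u0 ≤ -q := by
    have hint : 4*((n:ℤ) - 2*b - 1) ≤ -(n:ℤ) := by omega
    have hreal : ((4*((n:ℤ) - 2*b - 1) : ℤ) : ℝ) ≤ ((-(n:ℤ) : ℤ) : ℝ) := by exact_mod_cast hint
    push_cast at hreal
    calc u0 ≤ (-((n:ℝ)/4))/α := (div_le_div_iff_of_pos_right hα0).mpr (by linarith)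
      _ = -q := by rw [hqdef, ← hn1α]; ring
  have huMq : q ≤ uM := by
    have hint : (n:ℤ) ≤ 4*((n:ℤ) - 2*a + 1) := by omega
    have hreal : (((n:ℤ) : ℤ) : ℝ) ≤ ((4*((n:ℤ) - 2*a + 1) : ℤ) : ℝ) := by exact_mod_cast hint
    push_cast at hreal
    calc q = ((n:ℝ)/4)/α := by rw [hqdef, ← hn1α]; ring
      _ ≤ uM := (div_le_div_iff_of_pos_right hα0).mpr (by linarith)
  have hu0M : u0 ≤ uM := by linarith
  have hIic : IntegrableOn p2 (Set.Iic u0) := p2_integrable.integrableOn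
  have hIocI : IntegrableOn p2 (Set.Ioc u0 uM) := p2_integrable.integrableOn
  have hsplit1 : (∫ t in Set.Iic u0, p2 t) + (∫ t in Set.Ioc u0 uM, p2 t)
      = ∫ t in Set.Iic uM, p2 t := by
    rw [← setIntegral_union (Set.Iic_disjoint_Ioc le_rfl) measurableSet_Ioc hIic hIocI,
      Set.Iic_union_Ioc_eq_Iic hu0M]
  have hsplit2 : (∫ t in Set.Iic uM, p2 t) + (∫ t in Set.Ioi uM, p2 t) = I := by
    have h := integral_add_compl (measurableSet_Iic (a := uM)) p2_integrable (μ := volume)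
    rwa [Set.compl_Iic] at h
  have hJItail : I - (∫ t in u0..uM, p2 t)
      = (∫ t in Set.Iic u0, p2 t) + (∫ t in Set.Ioi uM, p2 t) := by
    rw [intervalIntegral.integral_of_le hu0M]
    linarith
  have htail1 : |∫ t in Set.Iic u0, p2 t| ≤ Kc * Real.exp (-q^2/48) := by
    have h1 : |∫ t in Set.Iic u0, p2 t| ≤ ∫ t in Set.Iic u0, |p2 t| := by
      simpa [Real.norm_eq_abs] using
        norm_integral_le_integral_norm (μ := volume.restrict (Set.Iic u0)) p2
    refine h1.trans (tail_bound _ measurableSet_Iic q hq0 ?_)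
    intro t ht
    simp only [Set.mem_Iic] at ht
    have := neg_abs_le t
    linarith
  have htail2 : |∫ t in Set.Ioi uM, p2 t| ≤ Kc * Real.exp (-q^2/48) := by
    have h1 : |∫ t in Set.Ioi uM, p2 t| ≤ ∫ t in Set.Ioi uM, |p2 t| := by
      simpa [Real.norm_eq_abs] using
        norm_integral_le_integral_norm (μ := volume.restrict (Set.Ioi uM)) p2
    refine h1.trans (tail_bound _ measurableSet_Ioi q hq0 ?_)
    intro t ht
    simp only [Set.mem_Ioi] at ht
    have := le_abs_self t
    linarith
  have hintsmall : α * (Kc * Real.exp (-q^2/48)) ≤ 1 := by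
    have hkey2 : Kc * α ≤ Real.exp (q^2/48) := by
      have h2 := exp_ge_pow (q^2/48) (by positivity) 2 (by norm_num)
      have h3 : (q^2/48/((2:ℕ):ℝ))^2 = (q^2)^2/9216 := by push_cast; ring
      have h4 : (q^2)^2 = (n:ℝ)/256 := by
        rw [hq2, div_pow, hhalf2]; norm_num
      have h5 : Kc * α ≤ 65000 * α := mul_le_mul_of_nonneg_right Kc_le hα0.le
      have h6 : (65000:ℝ) * 2359296 ≤ (n:ℝ)^((1:ℝ)/4) := le_trans (by norm_num) hq15
      have h7 : 65000 * α ≤ (n:ℝ)/2359296 := by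
        rw [le_div_iff₀ (by norm_num)]
        calc 65000 * α * 2359296 = α * ((65000:ℝ)*2359296) := by ring
          _ ≤ α * (n:ℝ)^((1:ℝ)/4) := mul_le_mul_of_nonneg_left h6 hα0.le
          _ = (n:ℝ) := hαq
      calc Kc * α ≤ (n:ℝ)/2359296 := le_trans h5 h7
        _ = (q^2)^2/9216 := by rw [h4]; ring
        _ = (q^2/48/((2:ℕ):ℝ))^2 := h3.symm
        _ ≤ Real.exp (q^2/48) := h2
    calc α * (Kc * Real.exp (-q^2/48)) = (Kc * α) * Real.exp (-q^2/48) := by ring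
      _ ≤ Real.exp (q^2/48) * Real.exp (-q^2/48) :=
          mul_le_mul_of_nonneg_right hkey2 (Real.exp_nonneg _)
      _ = 1 := by
          rw [← Real.exp_add, show q^2/48 + -q^2/48 = 0 by ring, Real.exp_zero]
  have hB2 : |α/2 * ((∑ j ∈ Finset.Icc a b, Jf j) - I)| ≤ 1 := by
    rw [abs_mul, abs_of_nonneg (by positivity : (0:ℝ) ≤ α/2)]
    have hd : |(∑ j ∈ Finset.Icc a b, Jf j) - I| ≤ 2*(Kc * Real.exp (-q^2/48)) := by
      rw [abs_sub_comm, htel, hJItail]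
      calc |(∫ t in Set.Iic u0, p2 t) + (∫ t in Set.Ioi uM, p2 t)|
          ≤ |∫ t in Set.Iic u0, p2 t| + |∫ t in Set.Ioi uM, p2 t| := abs_add_le _ _
        _ ≤ 2*(Kc * Real.exp (-q^2/48)) := by linarith
    calc α/2 * |(∑ j ∈ Finset.Icc a b, Jf j) - I|
        ≤ α/2 * (2*(Kc * Real.exp (-q^2/48))) :=
          mul_le_mul_of_nonneg_left hd (by positivity)
      _ = α * (Kc * Real.exp (-q^2/48)) := by ring
      _ ≤ 1 := hintsmall
  have hdecomp : (∑ j ∈ Finset.Icc a b, p2 (((n:ℝ) - 2*(j:ℝ))/α)) - α/2 * I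
      = (∑ j ∈ Finset.Icc a b, (p2 (((n:ℝ) - 2*(j:ℝ))/α) - α/2 * Jf j))
        + α/2 * ((∑ j ∈ Finset.Icc a b, Jf j) - I) := by
    rw [Finset.sum_sub_distrib, ← Finset.mul_sum]; ring
  rw [hdecomp]
  calc |(∑ j ∈ Finset.Icc a b, (p2 (((n:ℝ) - 2*(j:ℝ))/α) - α/2 * Jf j))
        + α/2 * ((∑ j ∈ Finset.Icc a b, Jf j) - I)|
      ≤ |∑ j ∈ Finset.Icc a b, (p2 (((n:ℝ) - 2*(j:ℝ))/α) - α/2 * Jf j)|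
        + |α/2 * ((∑ j ∈ Finset.Icc a b, Jf j) - I)| := abs_add_le _ _
    _ ≤ (600000 * R + 1) + 1 := add_le_add habs1 hB2
    _ ≤ 600002 * R := by linarith
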